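/- If ψ is an approximate isometry from X to Y and U is a neighbourhood of ψ in Apx(X,Y), then there exists φ ∈ U with ψ < φ, i.e., φ strictly coarsens ψ (ψ lies in the interior of {ρ ∈ Apx(X,Y) : ρ ≤ φ}). -/

import Mathlib

open scoped ENNReal

/-- A Katětov function on a metric space, with values in `[0,∞]`. -/
def Katetov {X : Type*} [MetricSpace X] (ψ : X → ℝ≥0∞) : Prop :=
  ∀ x y : X, ψ x ≤ ENNReal.ofReal (dist x y) + ψ y ∧
    ENNReal.ofReal (dist x y) ≤ ψ x + ψ y

/-- An approximate isometry `X ⇝ Y`: a bi-Katětov function `X × Y → [0,∞]`. -/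
def BiKatetov {X Y : Type*} [MetricSpace X] [MetricSpace Y]
    (ψ : X × Y → ℝ≥0∞) : Prop :=
  (∀ y, Katetov fun x => ψ (x, y)) ∧ (∀ x, Katetov fun y => ψ (x, y))

/-- The composition `φψ(x,z) = inf_y (ψ(x,y) + φ(y,z))` of approximate
isometries `ψ : X ⇝ Y` and `φ : Y ⇝ Z`. -/
noncomputable def ApxComp {X Y Z : Type*} [MetricSpace X] [MetricSpace Y]
    [MetricSpace Z] (ψ : X × Y → ℝ≥0∞) (φ : Y × Z → ℝ≥0∞) :
    X × Z → ℝ≥0∞ :=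
  fun p => ⨅ y : Y, ψ (p.1, y) + φ (y, p.2)

/-- The pseudo-inverse `ψ*(y,x) = ψ(x,y)`. -/
def ApxInv {X Y : Type*} (ψ : X × Y → ℝ≥0∞) : Y × X → ℝ≥0∞ :=
  fun p => ψ (p.2, p.1)

/-- The space of approximate isometries from `X` to `Y`, topologised as a
subspace of the product `[0,∞]^{X×Y}`. -/
def Apx (X Y : Type*) [MetricSpace X] [MetricSpace Y] :=
  {ψ : X × Y → ℝ≥0∞ // BiKatetov ψ}

instance (X Y : Type*) [MetricSpace X] [MetricSpace Y] :
    TopologicalSpace (Apx X Y) :=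
  instTopologicalSpaceSubtype

open Set Filter

section Aux

variable {X Y : Type*} [MetricSpace X] [MetricSpace Y]

lemma bikat_bound {ρ : X × Y → ℝ≥0∞} (h : BiKatetov ρ) (x a : X) (y b : Y) :
    ρ (x, y) ≤ edist x a + ρ (a, b) + edist b y := by
  have h1 := (h.1 y x a).1
  have h2 := (h.2 a y b).1
  rw [← edist_dist] at h1 h2
  calc ρ (x, y) ≤ edist x a + ρ (a, y) := h1
    _ ≤ edist x a + (edist y b + ρ (a, b)) := by gcongr
    _ = edist x a + ρ (a, b) + edist b y := by rw [edist_comm y b]; ring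

/-- The coarsening of `ψ` determined by a finite set `S` and margin `ε`. -/
noncomputable def coarse (ψ : X × Y → ℝ≥0∞) (S : Finset (X × Y)) (ε : ℝ≥0∞) :
    X × Y → ℝ≥0∞ :=
  fun p => ⨅ q ∈ S, (edist p.1 q.1 + (ψ q + ε) + edist q.2 p.2)

variable {ψ : X × Y → ℝ≥0∞} {S : Finset (X × Y)} {ε : ℝ≥0∞}

lemma coarse_le {q : X × Y} (hq : q ∈ S) (p : X × Y) :
    coarse ψ S ε p ≤ edist p.1 q.1 + (ψ q + ε) + edist q.2 p.2 := by
  simp only [coarse]; exact iInf₂_le q hq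

lemma le_coarse {c : ℝ≥0∞} {p : X × Y}
    (h : ∀ q ∈ S, c ≤ edist p.1 q.1 + (ψ q + ε) + edist q.2 p.2) :
    c ≤ coarse ψ S ε p := by
  simp only [coarse]; exact le_iInf₂ h

lemma coarse_attained (hS : S.Nonempty) (p : X × Y) :
    ∃ q ∈ S, coarse ψ S ε p = edist p.1 q.1 + (ψ q + ε) + edist q.2 p.2 := by
  obtain ⟨q, hq, hmin⟩ :=
    S.exists_min_image (fun q => edist p.1 q.1 + (ψ q + ε) + edist q.2 p.2) hS
  exact ⟨q, hq, le_antisymm (coarse_le hq p) (le_coarse hmin)⟩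

lemma le_coarse_self (h : BiKatetov ψ) (p : X × Y) : ψ p ≤ coarse ψ S ε p := by
  refine le_coarse fun q hq => ?_
  calc ψ p = ψ (p.1, p.2) := by rfl
    _ ≤ edist p.1 q.1 + ψ (q.1, q.2) + edist q.2 p.2 := bikat_bound h _ _ _ _
    _ ≤ edist p.1 q.1 + (ψ q + ε) + edist q.2 p.2 := by gcongr; exact le_self_add

lemma coarse_at_mem {q : X × Y} (hq : q ∈ S) : coarse ψ S ε q ≤ ψ q + ε := by
  have := coarse_le (ψ := ψ) (ε := ε) hq q
  simpa [edist_self] using this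

lemma coarse_biKatetov (h : BiKatetov ψ) (S : Finset (X × Y)) (ε : ℝ≥0∞) :
    BiKatetov (coarse ψ S ε) := by
  rcases S.eq_empty_or_nonempty with rfl | hS
  · exact ⟨fun y x x' => by simp [coarse], fun x y y' => by simp [coarse]⟩
  constructor
  · intro y x x'
    simp only [← edist_dist]
    constructor
    · obtain ⟨⟨a, b⟩, hq, heq⟩ := coarse_attained (ψ := ψ) (ε := ε) hS (x', y)
      rw [heq]
      refine (coarse_le hq (x, y)).trans ?_
      calc edist x a + (ψ (a, b) + ε) + edist b y
          ≤ (edist x x' + edist x' a) + (ψ (a, b) + ε) + edist b y := by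
            gcongr; exact edist_triangle _ _ _
        _ = edist x x' + (edist x' a + (ψ (a, b) + ε) + edist b y) := by ring
    · obtain ⟨⟨a, b⟩, hq, heq⟩ := coarse_attained (ψ := ψ) (ε := ε) hS (x, y)
      obtain ⟨⟨a', b'⟩, hq', heq'⟩ := coarse_attained (ψ := ψ) (ε := ε) hS (x', y)
      rw [heq, heq']
      have haa' : edist a a' ≤ ψ (a, b) + ψ (a', b) := by
        have := (h.1 b a a').2; rwa [← edist_dist] at this
      have hb : ψ (a', b) ≤ edist b b' + ψ (a', b') := by
        have := (h.2 a' b b').1; rwa [← edist_dist] at this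
      have hbb' : edist b b' ≤ edist b y + edist b' y := by
        rw [edist_comm b' y]; exact edist_triangle _ _ _
      calc edist x x' ≤ edist x a + edist a a' + edist a' x' := edist_triangle4 _ _ _ _
        _ ≤ edist x a + (ψ (a, b) + ψ (a', b)) + edist a' x' := by gcongr
        _ ≤ edist x a + (ψ (a, b) + (edist b b' + ψ (a', b'))) + edist a' x' := by gcongr
        _ ≤ edist x a + (ψ (a, b) + ((edist b y + edist b' y) + ψ (a', b'))) + edist a' x' := by
            gcongr
        _ = (edist x a + ψ (a, b) + edist b y) + (edist x' a' + ψ (a', b') + edist b' y) := by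
            rw [edist_comm a' x']; ring
        _ ≤ (edist x a + (ψ (a, b) + ε) + edist b y)
            + (edist x' a' + (ψ (a', b') + ε) + edist b' y) := by
            gcongr <;> exact le_self_add
  · intro x y y'
    simp only [← edist_dist]
    constructor
    · obtain ⟨⟨a, b⟩, hq, heq⟩ := coarse_attained (ψ := ψ) (ε := ε) hS (x, y')
      rw [heq]
      refine (coarse_le hq (x, y)).trans ?_
      calc edist x a + (ψ (a, b) + ε) + edist b y
          ≤ edist x a + (ψ (a, b) + ε) + (edist b y' + edist y' y) := by
            gcongr; exact edist_triangle _ _ _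
        _ = edist y y' + (edist x a + (ψ (a, b) + ε) + edist b y') := by
            rw [edist_comm y' y]; ring
    · obtain ⟨⟨a, b⟩, hq, heq⟩ := coarse_attained (ψ := ψ) (ε := ε) hS (x, y)
      obtain ⟨⟨a', b'⟩, hq', heq'⟩ := coarse_attained (ψ := ψ) (ε := ε) hS (x, y')
      rw [heq, heq']
      have hbb' : edist b b' ≤ ψ (a, b) + ψ (a, b') := by
        have := (h.2 a b b').2; rwa [← edist_dist] at this
      have hb : ψ (a, b') ≤ edist a a' + ψ (a', b') := by
        have := (h.1 b' a a').1; rwa [← edist_dist] at this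
      have haa' : edist a a' ≤ edist x a + edist x a' := by
        rw [edist_comm x a]; exact edist_triangle _ _ _
      calc edist y y' ≤ edist y b + edist b b' + edist b' y' := edist_triangle4 _ _ _ _
        _ ≤ edist y b + (ψ (a, b) + ψ (a, b')) + edist b' y' := by gcongr
        _ ≤ edist y b + (ψ (a, b) + (edist a a' + ψ (a', b'))) + edist b' y' := by gcongr
        _ ≤ edist y b + (ψ (a, b) + ((edist x a + edist x a') + ψ (a', b'))) + edist b' y' := by
            gcongr
        _ = (edist x a + ψ (a, b) + edist b y) + (edist x a' + ψ (a', b') + edist b' y') := by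
            rw [edist_comm y b]; ring
        _ ≤ (edist x a + (ψ (a, b) + ε) + edist b y)
            + (edist x a' + (ψ (a', b') + ε) + edist b' y') := by
            gcongr <;> exact le_self_add

end Aux


/-- If `U` is a neighbourhood of `ψ` in `Apx(X,Y)`, there is `φ ∈ U` strictly
coarsening `ψ`: `ψ` lies in the interior of `{ρ : ρ ≤ φ}`. -/
theorem exists_strict_coarsening {X Y : Type*} [MetricSpace X] [MetricSpace Y]
    (ψ : Apx X Y) (U : Set (Apx X Y)) (hU : U ∈ nhds ψ) :
    ∃ φ ∈ U, ψ ∈ interior {ρ : Apx X Y | ∀ p, ρ.1 p ≤ φ.1 p} := by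
  have h2 : U ∈ Filter.comap Subtype.val (nhds ψ.1) := by
    exact (nhds_induced (Subtype.val : Apx X Y → X × Y → ℝ≥0∞) ψ).ge hU
  obtain ⟨V, hV, hVU⟩ := Filter.mem_comap.1 h2
  rw [nhds_pi, Filter.mem_pi'] at hV
  obtain ⟨S, t, ht, htV⟩ := hV
  have hex : ∀ q : X × Y, ∃ e : ℝ≥0∞, 0 < e ∧
      (ψ.1 q ≠ ⊤ → Icc (ψ.1 q - e) (ψ.1 q + e) ⊆ t q) := by
    intro q
    by_cases hq : ψ.1 q = ⊤
    · exact ⟨1, zero_lt_one, fun h => absurd hq h⟩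
    · obtain ⟨e, he, hsub⟩ := (ENNReal.hasBasis_nhds_of_ne_top hq).mem_iff.1 (ht q)
      exact ⟨e, he, fun _ => hsub⟩
  choose e hepos hesub using hex
  set ε := min 1 (S.inf e) with hεdef
  have hεpos : 0 < ε :=
    lt_min zero_lt_one ((Finset.lt_inf_iff (by simp : (0 : ℝ≥0∞) < ⊤)).2 fun q _ => hepos q)
  have hεle : ∀ q ∈ S, ε ≤ e q := fun q hq => (min_le_right _ _).trans (Finset.inf_le hq)
  set φf := coarse ψ.1 S ε with hφfdef
  have hbk : BiKatetov φf := coarse_biKatetov ψ.2 S ε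
  have hψle : ∀ p, ψ.1 p ≤ φf p := le_coarse_self ψ.2
  refine ⟨⟨φf, hbk⟩, ?_, ?_⟩
  · apply hVU
    apply htV
    intro q hqS
    have hqS' : q ∈ S := hqS
    by_cases hvq : ψ.1 q = ⊤
    · have h1 : φf q = ⊤ := top_le_iff.1 (hvq ▸ hψle q)
      have h2 := mem_of_mem_nhds (ht q)
      rw [hvq] at h2
      show φf q ∈ t q
      rwa [h1]
    · refine hesub q hvq ⟨tsub_le_self.trans (hψle q), ?_⟩
      exact (coarse_at_mem hqS').trans (add_le_add le_rfl (hεle q hqS'))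
  · set S' : Set (X × Y) := {q | q ∈ S ∧ ψ.1 q ≠ ⊤} with hS'def
    have hS'fin : S'.Finite := S.finite_toSet.subset fun q hq => hq.1
    set W₀ : Set ((X × Y) → ℝ≥0∞) := ⋂ q ∈ S', (fun f => f q) ⁻¹' Iio (ψ.1 q + ε) with hW₀def
    have hW₀open : IsOpen W₀ :=
      hS'fin.isOpen_biInter fun q _ => isOpen_Iio.preimage (continuous_apply q)
    have hWopen : IsOpen (Subtype.val ⁻¹' W₀ : Set (Apx X Y)) :=
      hW₀open.preimage continuous_subtype_val
    refine interior_maximal ?_ hWopen ?_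
    · intro ρ hρ p
      refine le_coarse fun q hq => ?_
      have hb : ρ.1 q ≤ ψ.1 q + ε := by
        by_cases hvq : ψ.1 q = ⊤
        · simp [hvq]
        · exact le_of_lt (Set.mem_iInter₂.1 hρ q ⟨hq, hvq⟩)
      calc ρ.1 p = ρ.1 (p.1, p.2) := by rfl
        _ ≤ edist p.1 q.1 + ρ.1 (q.1, q.2) + edist q.2 p.2 := bikat_bound ρ.2 _ _ _ _
        _ ≤ edist p.1 q.1 + (ψ.1 q + ε) + edist q.2 p.2 := by gcongr
    · exact Set.mem_iInter₂.2 fun q hq => ENNReal.lt_add_right hq.2 hεpos.ne'
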